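/- Let K be a locally compact Hausdorff space and X a Banach space over K ∈ {ℝ, ℂ}. Let f, g ∈ C₀(K, X) be such that M_f is connected. Then f ⊥_B g if and only if for each unimodular scalar t there exists k_t ∈ M_f such that f(k_t) ⊥_t g(k_t), i.e., ‖f(k_t) + αt·g(k_t)‖ ≥ ‖f(k_t)‖ for all real α. -/

import Mathlib

open ZeroAtInfty Filter Topology

private lemma bj_key {𝕜 X : Type*} [RCLike 𝕜] [NormedAddCommGroup X] [NormedSpace 𝕜 X]
    (x z : X) {c α : ℝ} (hc : 0 < c) (hcα : c ≤ α) :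
    ‖x + (c:𝕜) • z‖ ≤ (c/α) * ‖x + (α:𝕜) • z‖ + (1 - c/α) * ‖x‖ := by
  have hα : 0 < α := hc.trans_le hcα
  have hα' : (α:𝕜) ≠ 0 := by exact_mod_cast (RCLike.ofReal_ne_zero (K := 𝕜)).mpr hα.ne'
  have key : x + (c:𝕜) • z = (((c/α : ℝ)):𝕜) • (x + (α:𝕜) • z) + (((1 - c/α : ℝ)):𝕜) • x := by
    match_scalars <;> push_cast <;> field_simp <;> ring
  rw [key]
  have h1 : 0 ≤ c / α := by positivity
  have h2 : 0 ≤ 1 - c / α := by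
    have := (div_le_one hα).mpr hcα; linarith
  calc ‖(((c/α : ℝ)):𝕜) • (x + (α:𝕜) • z) + (((1 - c/α : ℝ)):𝕜) • x‖
      ≤ ‖(((c/α : ℝ)):𝕜) • (x + (α:𝕜) • z)‖ + ‖(((1 - c/α : ℝ)):𝕜) • x‖ := norm_add_le _ _
    _ = (c/α) * ‖x + (α:𝕜) • z‖ + (1 - c/α) * ‖x‖ := by
        rw [norm_smul, norm_smul, RCLike.norm_ofReal, RCLike.norm_ofReal,
          abs_of_nonneg h1, abs_of_nonneg h2]

private lemma bj_dichot {𝕜 X : Type*} [RCLike 𝕜] [NormedAddCommGroup X] [NormedSpace 𝕜 X]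
    (x z : X) {a b : ℝ} (ha : 0 < a) (hb : b < 0) (h1 : ‖x + (a:𝕜) • z‖ < ‖x‖) :
    ‖x‖ ≤ ‖x + (b:𝕜) • z‖ := by
  by_contra h2
  push_neg at h2
  have hab : (0:ℝ) < a - b := by linarith
  have hab' : (a:𝕜) - (b:𝕜) ≠ 0 := by
    have := (RCLike.ofReal_ne_zero (K := 𝕜)).mpr hab.ne'
    push_cast at this
    simpa using this
  have key : x = (((a/(a-b) : ℝ)):𝕜) • (x + (b:𝕜) • z) + (((-b/(a-b) : ℝ)):𝕜) • (x + (a:𝕜) • z) := by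
    match_scalars <;> push_cast <;> field_simp <;> ring
  have hθ : 0 < a/(a-b) := div_pos ha hab
  have hμ : 0 < -b/(a-b) := div_pos (by linarith) hab
  have hsum : a/(a-b) + -b/(a-b) = 1 := by field_simp; ring
  have hle := calc ‖x‖ = ‖(((a/(a-b) : ℝ)):𝕜) • (x + (b:𝕜) • z) + (((-b/(a-b) : ℝ)):𝕜) • (x + (a:𝕜) • z)‖ := by rw [← key]
    _ ≤ ‖(((a/(a-b) : ℝ)):𝕜) • (x + (b:𝕜) • z)‖ + ‖(((-b/(a-b) : ℝ)):𝕜) • (x + (a:𝕜) • z)‖ := norm_add_le _ _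
    _ = (a/(a-b)) * ‖x + (b:𝕜) • z‖ + (-b/(a-b)) * ‖x + (a:𝕜) • z‖ := by
        rw [norm_smul, norm_smul, RCLike.norm_ofReal, RCLike.norm_ofReal,
          abs_of_pos hθ, abs_of_pos hμ]
  have hlt : ‖x‖ < (a/(a-b)) * ‖x‖ + (-b/(a-b)) * ‖x‖ := by
    refine hle.trans_lt (add_lt_add ?_ ?_)
    · exact mul_lt_mul_of_pos_left h2 hθ
    · exact mul_lt_mul_of_pos_left h1 hμ
  rw [← add_mul, hsum, one_mul] at hlt
  exact lt_irrefl _ hlt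

private lemma C0_norm_apply_le {K X : Type*} [TopologicalSpace K] [NormedAddCommGroup X]
    (f : C₀(K, X)) (k : K) : ‖f k‖ ≤ ‖f‖ := by
  calc ‖f k‖ = ‖f.toBCF k‖ := rfl
  _ ≤ ‖f.toBCF‖ := f.toBCF.norm_coe_le_norm k
  _ = ‖f‖ := ZeroAtInftyContinuousMap.norm_toBCF_eq_norm

private lemma C0_norm_le {K X : Type*} [TopologicalSpace K] [NormedAddCommGroup X]
    (f : C₀(K, X)) {M : ℝ} (hM : 0 ≤ M) (h : ∀ k, ‖f k‖ ≤ M) : ‖f‖ ≤ M := by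
  rw [← ZeroAtInftyContinuousMap.norm_toBCF_eq_norm]
  exact (BoundedContinuousFunction.norm_le hM).mpr h

private lemma bj_aux_plus {𝕜 K X : Type*} [RCLike 𝕜] [TopologicalSpace K]
    [NormedAddCommGroup X] [NormedSpace 𝕜 X]
    (f g : C₀(K, X)) (hf : 0 < ‖f‖)
    (horth : ∀ lam : 𝕜, ‖f + lam • g‖ ≥ ‖f‖) (t : 𝕜) (ht : ‖t‖ = 1) :
    ∃ k : K, ‖f k‖ = ‖f‖ ∧ ∀ α : ℝ, 0 ≤ α → ‖f k‖ ≤ ‖f k + (α:𝕜) • (t • g k)‖ := by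
  set ε : ℝ := ‖f‖ / (2*(1+‖g‖)) with hεdef
  have hgpos : (0:ℝ) < 1 + ‖g‖ := by positivity
  have hε : 0 < ε := by positivity
  have hεhalf : ε * (1 + ‖g‖) = ‖f‖/2 := by rw [hεdef]; field_simp
  have hεle : ε ≤ ‖f‖/2 := by nlinarith [norm_nonneg g]
  have hn1 : ∀ n : ℕ, (1:ℝ) ≤ (n:ℝ)+1 := by
    intro n; have := Nat.cast_nonneg (α := ℝ) n; linarith
  -- selection of an approximating sequence
  have hsel : ∀ n : ℕ, ∃ k : K,
      ‖f‖ - ε/(((n:ℝ)+1)*((n:ℝ)+1)) < ‖f k + ((ε/((n:ℝ)+1) : ℝ):𝕜) • (t • g k)‖ := by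
    intro n
    by_contra hcon
    push_neg at hcon
    have hd : 0 < ε/(((n:ℝ)+1)*((n:ℝ)+1)) := by positivity
    have hdle : ε/(((n:ℝ)+1)*((n:ℝ)+1)) ≤ ε := by
      apply div_le_self hε.le
      nlinarith [hn1 n]
    have hnn : 0 ≤ ‖f‖ - ε/(((n:ℝ)+1)*((n:ℝ)+1)) := by linarith
    have hle : ‖f + (((ε/((n:ℝ)+1) : ℝ):𝕜) * t) • g‖ ≤ ‖f‖ - ε/(((n:ℝ)+1)*((n:ℝ)+1)) := by
      apply C0_norm_le _ hnn
      intro k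
      simpa [mul_smul] using hcon k
    have := horth (((ε/((n:ℝ)+1) : ℝ):𝕜) * t)
    linarith
  choose seq hseq using hsel
  -- lower bound on ‖f (seq n)‖
  have hfseq : ∀ n : ℕ, ‖f‖ - (‖f‖/2)/((n:ℝ)+1) ≤ ‖f (seq n)‖ := by
    intro n
    have h1 := hseq n
    have h2 : ‖f (seq n) + ((ε/((n:ℝ)+1) : ℝ):𝕜) • (t • g (seq n))‖
        ≤ ‖f (seq n)‖ + (ε/((n:ℝ)+1)) * ‖g‖ := by
      calc ‖f (seq n) + ((ε/((n:ℝ)+1) : ℝ):𝕜) • (t • g (seq n))‖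
          ≤ ‖f (seq n)‖ + ‖((ε/((n:ℝ)+1) : ℝ):𝕜) • (t • g (seq n))‖ := norm_add_le _ _
        _ ≤ ‖f (seq n)‖ + (ε/((n:ℝ)+1)) * ‖g‖ := by
            rw [norm_smul, RCLike.norm_ofReal, norm_smul, ht, one_mul,
              abs_of_pos (by positivity : (0:ℝ) < ε/((n:ℝ)+1))]
            have := C0_norm_apply_le g (seq n)
            have hcpos : (0:ℝ) < ε/((n:ℝ)+1) := by positivity
            nlinarith
    have hdle : ε/(((n:ℝ)+1)*((n:ℝ)+1)) ≤ ε/((n:ℝ)+1) := by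
      gcongr
      all_goals nlinarith [hn1 n, hε]
    have heq : (ε/((n:ℝ)+1)) * (1 + ‖g‖) = (‖f‖/2)/((n:ℝ)+1) := by
      rw [div_mul_eq_mul_div, hεhalf]
    nlinarith [hεhalf]
  have hseqC : ∀ n : ℕ, seq n ∈ {k : K | ‖f‖/2 ≤ ‖f k‖} := by
    intro n
    have h1 := hfseq n
    have h2 : (‖f‖/2)/((n:ℝ)+1) ≤ ‖f‖/2 := by
      apply div_le_self (by positivity) (hn1 n)
    simp only [Set.mem_setOf_eq]
    linarith
  -- compactness
  have hCclosed : IsClosed {k : K | ‖f‖/2 ≤ ‖f k‖} :=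
    isClosed_le continuous_const (map_continuous f).norm
  have hcocompact : {k : K | ‖f k‖ < ‖f‖/2} ∈ cocompact K := by
    have h0 : Tendsto (fun k => ‖f k‖) (cocompact K) (𝓝 0) := by
      simpa using (zero_at_infty f).norm
    exact h0.eventually_lt_const (by positivity)
  obtain ⟨S, hS, hSsub⟩ := mem_cocompact.mp hcocompact
  have hCsub : {k : K | ‖f‖/2 ≤ ‖f k‖} ⊆ S := by
    intro k hk
    by_contra hkS
    have h' := hSsub hkS
    simp only [Set.mem_setOf_eq] at h' hk
    linarith
  have hC : IsCompact {k : K | ‖f‖/2 ≤ ‖f k‖} := hS.of_isClosed_subset hCclosed hCsub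
  obtain ⟨k₀, hk₀C, hclus⟩ := hC.exists_mapClusterPt (f := atTop) (u := seq)
    (Filter.tendsto_principal.mpr (Filter.Eventually.of_forall hseqC))
  have htend : Tendsto (fun n : ℕ => 1/((n:ℝ)+1)) atTop (𝓝 0) :=
    tendsto_one_div_add_atTop_nhds_zero_nat
  have htendc : ∀ C : ℝ, Tendsto (fun n : ℕ => C/((n:ℝ)+1)) atTop (𝓝 0) := by
    intro C
    have := htend.const_mul C
    simpa [div_eq_mul_inv] using this
  -- the cluster point attains the norm
  have hA : ‖f k₀‖ = ‖f‖ := by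
    refine le_antisymm (C0_norm_apply_le f k₀) ?_
    by_contra hcon
    push_neg at hcon
    have hηpos : 0 < ‖f‖ - ‖f k₀‖ := by linarith
    set η := ‖f‖ - ‖f k₀‖ with hηdef
    have hU : {k : K | ‖f k‖ < ‖f‖ - η/2} ∈ 𝓝 k₀ := by
      apply IsOpen.mem_nhds (isOpen_lt (map_continuous f).norm continuous_const)
      simp only [Set.mem_setOf_eq]
      linarith
    have hfreq := mapClusterPt_iff_frequently.mp hclus _ hU
    have hev : ∀ᶠ n : ℕ in atTop, ‖f‖ - η/2 ≤ ‖f (seq n)‖ := by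
      have h2 : ∀ᶠ n : ℕ in atTop, (‖f‖/2)/((n:ℝ)+1) < η/2 :=
        (htendc (‖f‖/2)).eventually_lt_const (by positivity)
      filter_upwards [h2] with n hn
      have := hfseq n
      linarith
    obtain ⟨n, hn1', hn2⟩ := (hfreq.and_eventually hev).exists
    simp only [Set.mem_setOf_eq] at hn1'
    linarith
  -- directional orthogonality at the cluster point
  have hB : ∀ α : ℝ, 0 < α → ‖f‖ ≤ ‖f k₀ + (α:𝕜) • (t • g k₀)‖ := by
    intro α hα
    by_contra hcon
    push_neg at hcon
    have hηpos : 0 < ‖f‖ - ‖f k₀ + (α:𝕜) • (t • g k₀)‖ := by linarith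
    set η := ‖f‖ - ‖f k₀ + (α:𝕜) • (t • g k₀)‖ with hηdef
    have hUopen : IsOpen {k : K | ‖f k + (α:𝕜) • (t • g k)‖ < ‖f‖ - η/2} := by
      apply isOpen_lt _ continuous_const
      exact ((map_continuous f).add
        (((map_continuous g).const_smul t).const_smul ((α:ℝ):𝕜))).norm
    have hU : {k : K | ‖f k + (α:𝕜) • (t • g k)‖ < ‖f‖ - η/2} ∈ 𝓝 k₀ := by
      apply hUopen.mem_nhds
      simp only [Set.mem_setOf_eq]
      linarith
    have hfreq := mapClusterPt_iff_frequently.mp hclus _ hU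
    have hev : ∀ᶠ n : ℕ in atTop, ‖f‖ - η/2 ≤ ‖f (seq n) + (α:𝕜) • (t • g (seq n))‖ := by
      have h3 : ∀ᶠ n : ℕ in atTop, ε/((n:ℝ)+1) < α := (htendc ε).eventually_lt_const hα
      have h4 : ∀ᶠ n : ℕ in atTop, α/((n:ℝ)+1) < η/2 :=
        (htendc α).eventually_lt_const (by positivity)
      filter_upwards [h3, h4] with n h3n h4n
      have hcpos : (0:ℝ) < ε/((n:ℝ)+1) := by positivity
      have hkey := bj_key (𝕜 := 𝕜) (f (seq n)) (t • g (seq n)) hcpos h3n.le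
      have hxle : ‖f (seq n)‖ ≤ ‖f‖ := C0_norm_apply_le f (seq n)
      have hfrac : 0 ≤ 1 - (ε/((n:ℝ)+1))/α := by
        have := (div_le_one hα).mpr h3n.le
        linarith
      have h5 : ‖f‖ - ε/(((n:ℝ)+1)*((n:ℝ)+1)) <
          ((ε/((n:ℝ)+1))/α) * ‖f (seq n) + (α:𝕜) • (t • g (seq n))‖
            + (1 - (ε/((n:ℝ)+1))/α) * ‖f‖ := by
        refine (hseq n).trans_le (hkey.trans ?_)
        have := mul_le_mul_of_nonneg_left hxle hfrac
        linarith
      have h6 : ((ε/((n:ℝ)+1))/α) * (‖f‖ - ‖f (seq n) + (α:𝕜) • (t • g (seq n))‖)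
          < ε/(((n:ℝ)+1)*((n:ℝ)+1)) := by nlinarith [h5]
      have hca : 0 < α/(ε/((n:ℝ)+1)) := div_pos hα hcpos
      have h7 := (mul_lt_mul_iff_right₀ hca).mpr h6
      have hsimp1 : (α/(ε/((n:ℝ)+1))) * (((ε/((n:ℝ)+1))/α)
          * (‖f‖ - ‖f (seq n) + (α:𝕜) • (t • g (seq n))‖))
          = ‖f‖ - ‖f (seq n) + (α:𝕜) • (t • g (seq n))‖ := by
        field_simp
      have hsimp2 : (α/(ε/((n:ℝ)+1))) * (ε/(((n:ℝ)+1)*((n:ℝ)+1))) = α/((n:ℝ)+1) := by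
        have h0 : ((n:ℝ)+1) ≠ 0 := by positivity
        field_simp
      rw [hsimp1, hsimp2] at h7
      linarith
    obtain ⟨n, hn1', hn2⟩ := (hfreq.and_eventually hev).exists
    simp only [Set.mem_setOf_eq] at hn1'
    linarith
  refine ⟨k₀, hA, ?_⟩
  intro α hα0
  rcases hα0.eq_or_lt with h | h
  · rw [← h]
    simp
  · rw [hA]
    exact hB α h

/-- Birkhoff–James orthogonality in `C₀(K, X)` via directional orthogonality, when the
norm-attaining set `M_f` is connected. -/
theorem bj_char_C0KX_directional {𝕜 K X : Type*} [RCLike 𝕜] [TopologicalSpace K]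
    [LocallyCompactSpace K] [T2Space K]
    [NormedAddCommGroup X] [NormedSpace 𝕜 X] [CompleteSpace X]
    (f g : C₀(K, X)) (hMf : IsConnected {k : K | ‖f k‖ = ‖f‖}) :
    (∀ lam : 𝕜, ‖f + lam • g‖ ≥ ‖f‖) ↔
      ∀ t : 𝕜, ‖t‖ = 1 → ∃ kt : K, ‖f kt‖ = ‖f‖ ∧
        ∀ α : ℝ, ‖f kt + (α • t) • g kt‖ ≥ ‖f kt‖ := by
  constructor
  · intro horth t ht
    rcases (norm_nonneg f).eq_or_lt with hf0 | hfpos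
    · obtain ⟨k, hk⟩ := hMf.nonempty
      simp only [Set.mem_setOf_eq] at hk
      refine ⟨k, hk, ?_⟩
      intro α
      have h0 : ‖f k‖ = 0 := by rw [hk, ← hf0]
      rw [ge_iff_le, h0]
      exact norm_nonneg _
    · obtain ⟨kp, hkp1, hkp2⟩ := bj_aux_plus f g hfpos horth t ht
      obtain ⟨km, hkm1, hkm2⟩ := bj_aux_plus f g hfpos horth (-t) (by rw [norm_neg, ht])
      set Sp := {k : K | ∀ α : ℝ, 0 ≤ α → ‖f k‖ ≤ ‖f k + (α:𝕜) • (t • g k)‖} with hSpdef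
      set Sm := {k : K | ∀ α : ℝ, 0 ≤ α → ‖f k‖ ≤ ‖f k + (α:𝕜) • ((-t) • g k)‖} with hSmdef
      have hclosed : ∀ s : 𝕜, IsClosed {k : K | ∀ α : ℝ, 0 ≤ α →
          ‖f k‖ ≤ ‖f k + (α:𝕜) • (s • g k)‖} := by
        intro s
        have heq : {k : K | ∀ α : ℝ, 0 ≤ α → ‖f k‖ ≤ ‖f k + (α:𝕜) • (s • g k)‖}
            = ⋂ (α : ℝ) (_ : 0 ≤ α), {k : K | ‖f k‖ ≤ ‖f k + (α:𝕜) • (s • g k)‖} := by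
          ext k
          simp only [Set.mem_setOf_eq, Set.mem_iInter]
        rw [heq]
        refine isClosed_iInter fun α => isClosed_iInter fun _ => ?_
        exact isClosed_le (map_continuous f).norm
          ((map_continuous f).add
            (((map_continuous g).const_smul s).const_smul ((α:ℝ):𝕜))).norm
      have hcover : {k : K | ‖f k‖ = ‖f‖} ⊆ Sp ∪ Sm := by
        intro k _
        by_cases hp : k ∈ Sp
        · exact Or.inl hp
        · right
          rw [hSpdef, Set.mem_setOf_eq] at hp
          push_neg at hp
          obtain ⟨a, ha0, hlt⟩ := hp
          have hapos : 0 < a := by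
            rcases ha0.eq_or_lt with h | h
            · exfalso
              rw [← h] at hlt
              simp at hlt
            · exact h
          intro β hβ0
          rcases hβ0.eq_or_lt with h | h
          · rw [← h]
            simp
          · have hrw : ((β : ℝ):𝕜) • ((-t) • g k) = (((-β : ℝ)):𝕜) • (t • g k) := by
              push_cast
              rw [neg_smul, smul_neg, neg_smul]
            rw [hrw]
            exact bj_dichot (f k) (t • g k) hapos (by linarith : -β < 0) hlt
      have hconn := isPreconnected_closed_iff.mp hMf.isPreconnected Sp Sm
        (hclosed t) (hclosed (-t)) hcover ⟨kp, hkp1, hkp2⟩ ⟨km, hkm1, hkm2⟩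
      obtain ⟨kt, hktM, hktp, hktm⟩ := hconn
      simp only [Set.mem_setOf_eq] at hktM
      refine ⟨kt, hktM, ?_⟩
      intro α
      have hsm : (α • t) • g kt = ((α : ℝ):𝕜) • (t • g kt) := by
        rw [RCLike.real_smul_eq_coe_mul, mul_smul]
      rw [ge_iff_le, hsm]
      rcases le_or_gt 0 α with h | h
      · exact hktp α h
      · have hm := hktm (-α) (by linarith)
        have hrw : (((-α : ℝ)):𝕜) • ((-t) • g kt) = ((α : ℝ):𝕜) • (t • g kt) := by
          push_cast
          simp [neg_smul, smul_neg]
        rwa [hrw] at hm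
  · intro h lam
    rcases eq_or_ne lam 0 with rfl | hlam
    · simp
    · have hlam' : ‖lam‖ ≠ 0 := norm_ne_zero_iff.mpr hlam
      have hnorm : ‖(‖lam‖⁻¹ • lam : 𝕜)‖ = 1 := by
        rw [norm_smul, norm_inv, norm_norm, inv_mul_cancel₀ hlam']
      obtain ⟨k, hk1, hk2⟩ := h (‖lam‖⁻¹ • lam) hnorm
      have hk3 := hk2 ‖lam‖
      have hrw : ((‖lam‖ : ℝ) • (‖lam‖⁻¹ • lam) : 𝕜) = lam := by
        rw [smul_smul, mul_inv_cancel₀ hlam', one_smul]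
      rw [hrw] at hk3
      calc ‖f‖ = ‖f k‖ := hk1.symm
        _ ≤ ‖f k + lam • g k‖ := hk3
        _ = ‖(f + lam • g) k‖ := by simp
        _ ≤ ‖f + lam • g‖ := C0_norm_apply_le _ k
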